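/- arXiv:2105.10838 — 6 statements merged into one kernel-verified Lean document; each statement's English description precedes it below -/
import Mathlib

section
/- Let a ≥ 1 and b ≥ 0 be integers with d = a + b, and let n ≥ d. Let X and Y be n × d real matrices, each of full column rank d. Then X I_{a,b} Xᵀ = Y I_{a,b} Yᵀ if and only if there exists an invertible d × d real matrix Q such that X = Y Q and Q I_{a,b} Qᵀ = I_{a,b}. -/
open Matrix
/-- `I_{a,b}`: the `(a+b) × (a+b)` diagonal matrix whose first `a` diagonal entries
equal `1` and whose last `b` diagonal entries equal `-1`. -/
def Iab (a b : ℕ) : Matrix (Fin (a + b)) (Fin (a + b)) ℝ :=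
  Matrix.diagonal (fun i => if (i : ℕ) < a then (1 : ℝ) else -1)

lemma Iab_transpose (a b : ℕ) : (Iab a b)ᵀ = Iab a b := Matrix.diagonal_transpose _

lemma Iab_sq (a b : ℕ) : Iab a b * Iab a b = 1 := by
  rw [Iab, Matrix.diagonal_mul_diagonal]
  convert Matrix.diagonal_one with i
  split_ifs <;> norm_num

lemma isUnit_det_of_rank_eq_card {d : ℕ} (M : Matrix (Fin d) (Fin d) ℝ) (h : M.rank = d) :
    IsUnit M.det := by
  rw [← Matrix.isUnit_iff_isUnit_det, ← Matrix.mulVec_surjective_iff_isUnit]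
  have : LinearMap.range M.mulVecLin = ⊤ := by
    apply Submodule.eq_top_of_finrank_eq
    rw [show Module.finrank ℝ (LinearMap.range M.mulVecLin) = M.rank from rfl, h,
      Module.finrank_fintype_fun_eq_card, Fintype.card_fin]
  intro v
  obtain ⟨w, hw⟩ := LinearMap.range_eq_top.mp this v
  exact ⟨w, hw⟩

lemma isUnit_gram {d n : ℕ} (X : Matrix (Fin n) (Fin d) ℝ) (hX : X.rank = d) :
    IsUnit (Xᵀ * X).det := by
  apply isUnit_det_of_rank_eq_card
  rw [Matrix.rank_transpose_mul_self, hX]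

/-- For full column rank `n × (a+b)` real matrices `X, Y` (with `a ≥ 1`,
`n ≥ a + b`), `X I_{a,b} Xᵀ = Y I_{a,b} Yᵀ` iff there is an invertible matrix `Q` with
`X = Y Q` and `Q I_{a,b} Qᵀ = I_{a,b}`. -/
theorem stmt0 (a b n : ℕ) (ha : 1 ≤ a) (hn : a + b ≤ n)
    (X Y : Matrix (Fin n) (Fin (a + b)) ℝ)
    (hX : X.rank = a + b) (hY : Y.rank = a + b) :
    X * Iab a b * Xᵀ = Y * Iab a b * Yᵀ ↔
      ∃ Q : Matrix (Fin (a + b)) (Fin (a + b)) ℝ,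
        IsUnit Q.det ∧ X = Y * Q ∧ Q * Iab a b * Qᵀ = Iab a b := by
  set I := Iab a b with hI
  have hIt : Iᵀ = I := Iab_transpose a b
  have hII : I * I = 1 := Iab_sq a b
  constructor
  · intro h
    have hGX : IsUnit (Xᵀ * X).det := isUnit_gram X hX
    have hGY : IsUnit (Yᵀ * Y).det := isUnit_gram Y hY
    -- X = (X I Xᵀ) * (X (XᵀX)⁻¹ I)
    have hXrec : X = X * I * Xᵀ * (X * (Xᵀ * X)⁻¹ * I) := by
      calc X = X * (I * ((Xᵀ * X) * ((Xᵀ * X)⁻¹ * I))) := by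
              rw [Matrix.mul_nonsing_inv_cancel_left _ _ hGX, hII, Matrix.mul_one]
        _ = X * I * Xᵀ * (X * (Xᵀ * X)⁻¹ * I) := by
              simp only [Matrix.mul_assoc]
    obtain ⟨Q, hQ⟩ : ∃ Q : Matrix (Fin (a + b)) (Fin (a + b)) ℝ,
        Q = I * Yᵀ * (X * (Xᵀ * X)⁻¹ * I) := ⟨_, rfl⟩
    have hXYQ : X = Y * Q := by
      rw [hQ]
      calc X = X * I * Xᵀ * (X * (Xᵀ * X)⁻¹ * I) := hXrec
        _ = Y * I * Yᵀ * (X * (Xᵀ * X)⁻¹ * I) := by rw [h]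
        _ = Y * (I * Yᵀ * (X * (Xᵀ * X)⁻¹ * I)) := by simp only [Matrix.mul_assoc]
    -- derive Q I Qᵀ = I
    have h2 : Y * (Q * I * Qᵀ) * Yᵀ = Y * I * Yᵀ := by
      calc Y * (Q * I * Qᵀ) * Yᵀ = (Y * Q) * I * (Y * Q)ᵀ := by
            rw [Matrix.transpose_mul]; simp only [Matrix.mul_assoc]
        _ = X * I * Xᵀ := by rw [← hXYQ]
        _ = Y * I * Yᵀ := h
    have hcancel : ∀ M N : Matrix (Fin (a + b)) (Fin (a + b)) ℝ,
        Y * M * Yᵀ = Y * N * Yᵀ → M = N := by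
      intro M N hMN
      have h3 : Yᵀ * (Y * M * Yᵀ) * Y = Yᵀ * (Y * N * Yᵀ) * Y := by rw [hMN]
      have h4 : (Yᵀ * Y) * M * (Yᵀ * Y) = (Yᵀ * Y) * N * (Yᵀ * Y) := by
        simpa only [Matrix.mul_assoc] using h3
      have h5 : M * (Yᵀ * Y) = N * (Yᵀ * Y) := by
        have := congrArg (fun Z => (Yᵀ * Y)⁻¹ * Z) h4
        simpa only [← Matrix.mul_assoc, Matrix.nonsing_inv_mul _ hGY, Matrix.one_mul] using this
      have := congrArg (fun Z => Z * (Yᵀ * Y)⁻¹) h5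
      simpa only [Matrix.mul_assoc, Matrix.mul_nonsing_inv _ hGY, Matrix.mul_one] using this
    have hQIQ : Q * I * Qᵀ = I := by
      apply hcancel
      calc Y * (Q * I * Qᵀ) * Yᵀ = Y * I * Yᵀ := h2
        _ = Y * I * Yᵀ := rfl
    have hdetQ : IsUnit Q.det := by
      have hdI : I.det * I.det = 1 := by
        rw [← Matrix.det_mul, hII, Matrix.det_one]
      have : Q.det * I.det * Q.det = I.det := by
        have := congrArg Matrix.det hQIQ
        rwa [Matrix.det_mul, Matrix.det_mul, Matrix.det_transpose] at this
      have hQne : Q.det ≠ 0 := by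
        intro h0
        rw [h0, zero_mul, mul_zero] at this
        have : I.det = 0 := this.symm
        rw [this, mul_zero] at hdI
        exact zero_ne_one hdI
      exact isUnit_iff_ne_zero.mpr hQne
    exact ⟨Q, hdetQ, hXYQ, hQIQ⟩
  · rintro ⟨Q, hQdet, rfl, hQI⟩
    calc Y * Q * I * (Y * Q)ᵀ = Y * (Q * I * Qᵀ) * Yᵀ := by
          rw [Matrix.transpose_mul]; simp only [Matrix.mul_assoc]
      _ = Y * I * Yᵀ := by rw [hQI]
end

section
/- Let a ≥ 1 and b ≥ 0 be integers with d = a + b, and let Q be a d × d real matrix with Q I_{a,b} Qᵀ = I_{a,b}. Then every diagonal entry of Q Qᵀ is at least 1. Moreover, all diagonal entries of Q Qᵀ are equal to 1 if and only if Q is (a,b) block orthogonal, i.e. Q = diag(Q₁, Q₂) with Q₁ an a × a orthogonal matrix and Q₂ a b × b orthogonal matrix. -/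
open Matrix

/-- `I_{a,b}` as a block matrix over the index type `Fin a ⊕ Fin b`: the diagonal matrix
whose first `a` diagonal entries equal `1` and whose last `b` diagonal entries equal `-1`. -/
def IabS (a b : ℕ) : Matrix (Fin a ⊕ Fin b) (Fin a ⊕ Fin b) ℝ :=
  Matrix.fromBlocks 1 0 0 (-1)

lemma diag_mul_transpose_nonneg {m n : Type*} [Fintype n] (M : Matrix m n ℝ) (i : m) :
    0 ≤ (M * Mᵀ) i i := by
  rw [Matrix.mul_apply]
  exact Finset.sum_nonneg fun j _ => by simp [Matrix.transpose_apply, mul_self_nonneg]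

lemma eq_zero_of_diag_mul_transpose {m n : Type*} [Fintype n] (M : Matrix m n ℝ)
    (h : ∀ i, (M * Mᵀ) i i = 0) : M = 0 := by
  ext i j
  have := h i
  rw [Matrix.mul_apply] at this
  have hz := (Finset.sum_eq_zero_iff_of_nonneg
    (fun k _ => by simp [Matrix.transpose_apply, mul_self_nonneg])).mp this j (Finset.mem_univ j)
  simpa [Matrix.transpose_apply, mul_self_eq_zero] using hz

/-- If `Q I_{a,b} Qᵀ = I_{a,b}` (with `a ≥ 1`, `b ≥ 0`), then every
diagonal entry of `Q Qᵀ` is at least `1`; and all diagonal entries of `Q Qᵀ` equal `1`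
iff `Q = diag(Q₁, Q₂)` with `Q₁` an `a × a` orthogonal matrix and `Q₂` a `b × b`
orthogonal matrix. -/
theorem stmt4 (a b : ℕ) (ha : 1 ≤ a)
    (Q : Matrix (Fin a ⊕ Fin b) (Fin a ⊕ Fin b) ℝ)
    (hQ : Q * IabS a b * Qᵀ = IabS a b) :
    (∀ i, 1 ≤ (Q * Qᵀ) i i) ∧
      ((∀ i, (Q * Qᵀ) i i = 1) ↔
        ∃ (Q₁ : Matrix (Fin a) (Fin a) ℝ) (Q₂ : Matrix (Fin b) (Fin b) ℝ),
          Q₁ * Q₁ᵀ = 1 ∧ Q₂ * Q₂ᵀ = 1 ∧ Q = Matrix.fromBlocks Q₁ 0 0 Q₂) := by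
  obtain ⟨A, B, C, D, rfl⟩ : ∃ A B C D, Q = fromBlocks A B C D :=
    ⟨Q.toBlocks₁₁, Q.toBlocks₁₂, Q.toBlocks₂₁, Q.toBlocks₂₂, (Matrix.fromBlocks_toBlocks Q).symm⟩
  rw [IabS, Matrix.fromBlocks_transpose, Matrix.fromBlocks_multiply,
    Matrix.fromBlocks_multiply] at hQ
  have h11 : A * Aᵀ + -(B * Bᵀ) = 1 := by
    have := congrArg Matrix.toBlocks₁₁ hQ
    simpa [Matrix.toBlocks_fromBlocks₁₁, Matrix.mul_neg] using this
  have h22 : C * Cᵀ + -(D * Dᵀ) = -1 := by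
    have := congrArg Matrix.toBlocks₂₂ hQ
    simpa [Matrix.toBlocks_fromBlocks₂₂, Matrix.mul_neg] using this
  have hmul : fromBlocks A B C D * (fromBlocks A B C D)ᵀ =
      fromBlocks (A * Aᵀ + B * Bᵀ) (A * Cᵀ + B * Dᵀ) (C * Aᵀ + D * Bᵀ) (C * Cᵀ + D * Dᵀ) := by
    rw [Matrix.fromBlocks_transpose, Matrix.fromBlocks_multiply]
  have hA : ∀ i, (A * Aᵀ) i i = 1 + (B * Bᵀ) i i := fun i => by
    have := congrFun (congrFun h11 i) i
    simp only [Matrix.add_apply, Matrix.neg_apply, Matrix.one_apply_eq] at this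
    linarith
  have hD : ∀ i, (D * Dᵀ) i i = 1 + (C * Cᵀ) i i := fun i => by
    have := congrFun (congrFun h22 i) i
    simp only [Matrix.add_apply, Matrix.neg_apply, Matrix.one_apply_eq] at this
    linarith
  have hdiag : ∀ i, (fromBlocks A B C D * (fromBlocks A B C D)ᵀ) i i =
      Sum.elim (fun i => 1 + 2 * (B * Bᵀ) i i) (fun i => 1 + 2 * (C * Cᵀ) i i) i := by
    rintro (i | i) <;>
      simp [hmul, Matrix.fromBlocks_apply₁₁, Matrix.fromBlocks_apply₂₂, Matrix.add_apply,
        hA, hD] <;> ring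
  constructor
  · rintro (i | i) <;> rw [hdiag] <;> simp <;>
      [exact diag_mul_transpose_nonneg B i; exact diag_mul_transpose_nonneg C i]
  constructor
  · intro h
    have hB : B = 0 := by
      apply eq_zero_of_diag_mul_transpose
      intro i
      have := h (Sum.inl i)
      rw [hdiag] at this
      simp at this
      linarith [diag_mul_transpose_nonneg B i]
    have hC : C = 0 := by
      apply eq_zero_of_diag_mul_transpose
      intro i
      have := h (Sum.inr i)
      rw [hdiag] at this
      simp at this
      linarith [diag_mul_transpose_nonneg C i]
    refine ⟨A, D, ?_, ?_, by rw [hB, hC]⟩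
    · rw [hB] at h11; simpa using h11
    · rw [hC] at h22
      simp only [Matrix.zero_mul, zero_add] at h22
      have := congrArg Neg.neg h22
      simpa using this
  · rintro ⟨Q₁, Q₂, hQ₁, hQ₂, heq⟩
    have hAQ : A = Q₁ := by
      have := congrArg Matrix.toBlocks₁₁ heq; simpa using this
    have hBQ : B = 0 := by
      have := congrArg Matrix.toBlocks₁₂ heq; simpa using this
    have hCQ : C = 0 := by
      have := congrArg Matrix.toBlocks₂₁ heq; simpa using this
    have hDQ : D = Q₂ := by
      have := congrArg Matrix.toBlocks₂₂ heq; simpa using this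
    subst hAQ hBQ hCQ hDQ
    rintro (i | i) <;> rw [hdiag] <;> simp [hQ₁, hQ₂, Matrix.one_apply_eq]
end

section
/- Let a ≥ 1 and b ≥ 0 be integers with d = a + b. Let Z be an n × d real matrix such that Zᵀ Z is a diagonal matrix with strictly positive diagonal entries, let Q be a d × d real matrix with Q I_{a,b} Qᵀ = I_{a,b}, and set X = Z Q. Then the Frobenius norms satisfy ‖Z‖_F ≤ ‖X‖_F. -/
open Matrix

/-- The Frobenius norm of a real matrix: the square root of the sum of squares of
its entries. -/
noncomputable def frobNorm {m n : Type*} [Fintype m] [Fintype n]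
    (M : Matrix m n ℝ) : ℝ :=
  Real.sqrt (∑ i, ∑ j, (M i j) ^ 2)

/-- If `Zᵀ Z` is diagonal with strictly positive diagonal entries,
`Q I_{a,b} Qᵀ = I_{a,b}` and `X = Z Q`, then `‖Z‖_F ≤ ‖X‖_F`. -/
theorem stmt6 (n a b : ℕ) (ha : 1 ≤ a)
    (Z : Matrix (Fin n) (Fin (a + b)) ℝ) (w : Fin (a + b) → ℝ)
    (hw : ∀ i, 0 < w i) (hZ : Zᵀ * Z = Matrix.diagonal w)
    (Q : Matrix (Fin (a + b)) (Fin (a + b)) ℝ)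
    (hQ : Q * Iab a b * Qᵀ = Iab a b)
    (X : Matrix (Fin n) (Fin (a + b)) ℝ) (hX : X = Z * Q) :
    frobNorm Z ≤ frobNorm X := by
  set ε : Fin (a + b) → ℝ := fun i => if (i : ℕ) < a then (1 : ℝ) else -1 with hε
  -- rows of Q satisfy ∑ j, Q i j * ε j * Q i j = ε i
  have hrow : ∀ i, (∑ j, Q i j * ε j * Q i j) = ε i := by
    intro i
    have h := congrFun (congrFun hQ i) i
    rw [Matrix.mul_apply] at h
    simp only [Iab, Matrix.mul_diagonal, Matrix.transpose_apply,
      Matrix.diagonal_apply_eq] at h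
    simpa only [hε] using h
  have hεabs : ∀ i, |ε i| = 1 := by
    intro i
    by_cases h : (i : ℕ) < a <;> simp [hε, h]
  have hge : ∀ i, 1 ≤ ∑ j, Q i j ^ 2 := by
    intro i
    calc (1 : ℝ) = |∑ j, Q i j * ε j * Q i j| := by rw [hrow i, hεabs i]
      _ ≤ ∑ j, |Q i j * ε j * Q i j| := Finset.abs_sum_le_sum_abs _ _
      _ = ∑ j, Q i j ^ 2 := by
          refine Finset.sum_congr rfl fun j _ => ?_
          rw [abs_mul, abs_mul, hεabs j, mul_one, ← sq, sq_abs]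
  -- sum of squares of Z equals ∑ w
  have hZsum : (∑ i, ∑ j, (Z i j) ^ 2) = ∑ k, w k := by
    rw [Finset.sum_comm]
    refine Finset.sum_congr rfl fun k _ => ?_
    have h := congrFun (congrFun hZ k) k
    simp only [Matrix.mul_apply, Matrix.transpose_apply, Matrix.diagonal_apply_eq] at h
    rw [← h]
    exact Finset.sum_congr rfl fun i _ => (sq (Z i k)).symm ▸ (pow_two (Z i k))
  -- sum of squares of X
  have hXX : Xᵀ * X = Qᵀ * Matrix.diagonal w * Q := by
    rw [hX, Matrix.transpose_mul, Matrix.mul_assoc, ← Matrix.mul_assoc Zᵀ, hZ,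
      ← Matrix.mul_assoc]
  have hXsum : (∑ i, ∑ j, (X i j) ^ 2) = ∑ k, w k * ∑ j, Q k j ^ 2 := by
    rw [Finset.sum_comm]
    have key : ∀ j, (∑ i, (X i j) ^ 2) = ∑ k, w k * Q k j ^ 2 := by
      intro j
      have h := congrFun (congrFun hXX j) j
      rw [Matrix.mul_apply, Matrix.mul_apply] at h
      simp only [Matrix.mul_diagonal, Matrix.transpose_apply] at h
      calc (∑ i, (X i j) ^ 2) = ∑ i, X i j * X i j := by
            exact Finset.sum_congr rfl fun i _ => sq (X i j)
        _ = ∑ k, Q k j * w k * Q k j := h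
        _ = ∑ k, w k * Q k j ^ 2 := Finset.sum_congr rfl fun k _ => by ring
    rw [Finset.sum_congr rfl fun j _ => key j, Finset.sum_comm]
    exact Finset.sum_congr rfl fun k _ => by rw [Finset.mul_sum]
  have hle : (∑ i, ∑ j, (Z i j) ^ 2) ≤ ∑ i, ∑ j, (X i j) ^ 2 := by
    rw [hZsum, hXsum]
    refine Finset.sum_le_sum fun k _ => ?_
    have := hge k
    nlinarith [hw k]
  exact Real.sqrt_le_sqrt hle
end

section
/- Let a ≥ 1 and b ≥ 0 be integers with d = a + b. Let Z be an n × d real matrix such that Zᵀ Z is a diagonal matrix with strictly positive diagonal entries, let Q be a d × d real matrix with Q I_{a,b} Qᵀ = I_{a,b}, and set X = Z Q. Then the spectral (operator ℓ₂ → ℓ₂) norms satisfy ‖Z‖ ≤ ‖X‖. -/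
open Matrix
open scoped InnerProductSpace

/-- The spectral norm (operator `ℓ₂ → ℓ₂` norm, i.e. largest singular value) of a real
matrix, defined as the operator norm of the induced linear map between Euclidean
spaces. -/
noncomputable def specNorm {m n : Type*} [Fintype m] [Fintype n]
    [DecidableEq n] (M : Matrix m n ℝ) : ℝ :=
  ‖LinearMap.toContinuousLinearMap (Matrix.toEuclideanLin M)‖

/-- If `Zᵀ Z` is diagonal with strictly positive diagonal entries,
`Q I_{a,b} Qᵀ = I_{a,b}` and `X = Z Q`, then the spectral norms satisfy `‖Z‖ ≤ ‖X‖`. -/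
theorem stmt7 (n a b : ℕ) (ha : 1 ≤ a)
    (Z : Matrix (Fin n) (Fin (a + b)) ℝ) (w : Fin (a + b) → ℝ)
    (hw : ∀ i, 0 < w i) (hZ : Zᵀ * Z = Matrix.diagonal w)
    (Q : Matrix (Fin (a + b)) (Fin (a + b)) ℝ)
    (hQ : Q * Iab a b * Qᵀ = Iab a b)
    (X : Matrix (Fin n) (Fin (a + b)) ℝ) (hX : X = Z * Q) :
    specNorm Z ≤ specNorm X := by
  haveI : NeZero (a + b) := ⟨by omega⟩
  obtain ⟨j0, -, hj0⟩ := Finset.exists_max_image Finset.univ w ⟨0, Finset.mem_univ _⟩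
  set ε : Fin (a+b) → ℝ := fun i => if (i : ℕ) < a then (1 : ℝ) else -1 with hε
  have hεabs : ∀ i, |ε i| = 1 := by
    intro i; by_cases h : (i : ℕ) < a <;> simp [hε, h]
  -- R : squared norm of row j0 of Q
  set R : ℝ := ∑ i, Q j0 i * Q j0 i with hR
  have hRnonneg : ∀ i : Fin (a+b), (0:ℝ) ≤ Q j0 i * Q j0 i := fun i => mul_self_nonneg _
  have hR1 : 1 ≤ R := by
    have h1 : (Q * Iab a b * Qᵀ) j0 j0 = ∑ i, ε i * (Q j0 i * Q j0 i) := by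
      simp only [Iab, Matrix.mul_apply, Matrix.diagonal_apply, Matrix.transpose_apply,
        Finset.sum_mul, Finset.mul_sum, Finset.sum_ite_eq, Finset.mem_univ, if_true]
      apply Finset.sum_congr rfl
      intro i _
      by_cases h : (i : ℕ) < a <;> simp [hε, h]
    have h2 : |∑ i, ε i * (Q j0 i * Q j0 i)| = 1 := by
      rw [← h1, hQ]
      simp [Iab, Matrix.diagonal]
      by_cases h : (j0 : ℕ) < a <;> simp [h]
    calc (1:ℝ) = |∑ i, ε i * (Q j0 i * Q j0 i)| := h2.symm
      _ ≤ ∑ i, |ε i * (Q j0 i * Q j0 i)| := Finset.abs_sum_le_sum_abs _ _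
      _ = R := by
          apply Finset.sum_congr rfl
          intro i _
          rw [abs_mul, hεabs, one_mul, abs_of_nonneg (hRnonneg i)]
  have hwj0 : 0 < w j0 := hw j0
  -- key quadratic form computation
  have key1 : ∀ v : Fin (a+b) → ℝ, (Z *ᵥ v) ⬝ᵥ (Z *ᵥ v) = ∑ i, w i * (v i * v i) := by
    intro v
    have h0 : Z *ᵥ v = v ᵥ* Zᵀ := (Matrix.vecMul_transpose Z v).symm
    rw [Matrix.dotProduct_mulVec, h0, Matrix.vecMul_vecMul, hZ]
    simp [Matrix.vecMul_diagonal, dotProduct]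
    exact Finset.sum_congr rfl fun i _ => by ring
  -- inner products in EuclideanSpace are dot products
  have hinner : ∀ (m : ℕ) (x y : EuclideanSpace ℝ (Fin m)),
      ⟪x, y⟫_ℝ = (fun i => x i) ⬝ᵥ (fun i => y i) := by
    intro m x y
    simp [PiLp.inner_apply, dotProduct, RCLike.inner_apply, mul_comm]
  -- Part 1 : specNorm Z ≤ √(w j0)
  have part1 : specNorm Z ≤ Real.sqrt (w j0) := by
    apply ContinuousLinearMap.opNorm_le_bound _ (Real.sqrt_nonneg _)
    intro v
    have hv : ((LinearMap.toContinuousLinearMap (Matrix.toEuclideanLin Z)) v : EuclideanSpace ℝ (Fin n))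
        = (WithLp.equiv 2 (Fin n → ℝ)).symm (Z *ᵥ (WithLp.equiv 2 (Fin (a+b) → ℝ)) v) := rfl
    have hnorm2 : ‖(LinearMap.toContinuousLinearMap (Matrix.toEuclideanLin Z)) v‖ ^ 2
        = ∑ i, w i * (v i * v i) := by
      rw [← real_inner_self_eq_norm_sq, hinner, hv]
      exact key1 _
    have hb : ‖(LinearMap.toContinuousLinearMap (Matrix.toEuclideanLin Z)) v‖ ^ 2
        ≤ (Real.sqrt (w j0) * ‖v‖) ^ 2 := by
      rw [hnorm2, mul_pow, Real.sq_sqrt hwj0.le]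
      have hv2 : ‖v‖ ^ 2 = ∑ i, v i * v i := by
        rw [← real_inner_self_eq_norm_sq, hinner]; rfl
      rw [hv2, Finset.mul_sum]
      refine Finset.sum_le_sum fun i _ => ?_
      exact mul_le_mul_of_nonneg_right (hj0 i (Finset.mem_univ i)) (mul_self_nonneg _)
    exact le_of_sq_le_sq hb (by positivity)
  -- Part 2 : √(w j0) ≤ specNorm X
  have part2 : Real.sqrt (w j0) ≤ specNorm X := by
    set s : Fin (a+b) → ℝ := Pi.single j0 (1:ℝ) with hs
    set uvec : Fin (a+b) → ℝ := fun i => Q j0 i with huvec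
    set yvec : Fin n → ℝ := fun k => Z k j0 with hyvec
    set u : EuclideanSpace ℝ (Fin (a+b)) := (WithLp.equiv 2 (Fin (a+b) → ℝ)).symm uvec with hu
    set y : EuclideanSpace ℝ (Fin n) := (WithLp.equiv 2 (Fin n → ℝ)).symm yvec with hy
    have hus : uvec = Qᵀ *ᵥ s := by
      funext i; simp [huvec, hs, Matrix.mulVec_single, Matrix.transpose_apply]
    have hys : yvec = Z *ᵥ s := by
      funext k; simp [hyvec, hs, Matrix.mulVec_single]
    -- norm of y
    have hyn : ‖y‖ = Real.sqrt (w j0) := by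
      have h2 : ‖y‖ ^ 2 = w j0 := by
        rw [← real_inner_self_eq_norm_sq, hinner]
        have := congrFun (congrFun hZ j0) j0
        simpa [Matrix.mul_apply, Matrix.transpose_apply, Matrix.diagonal_apply,
          dotProduct, hy, hyvec] using this
      rw [← h2, Real.sqrt_sq (norm_nonneg _)]
    -- norm of u
    have hun : ‖u‖ = Real.sqrt R := by
      have h2 : ‖u‖ ^ 2 = R := by
        rw [← real_inner_self_eq_norm_sq, hinner]; rfl
      rw [← h2, Real.sqrt_sq (norm_nonneg _)]
    -- the inner product ⟪y, X u⟫ = (w j0) * R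
    have hXu : ⟪y, (LinearMap.toContinuousLinearMap (Matrix.toEuclideanLin X)) u⟫_ℝ
        = w j0 * R := by
      have hXuv : ((LinearMap.toContinuousLinearMap (Matrix.toEuclideanLin X)) u
          : EuclideanSpace ℝ (Fin n))
          = (WithLp.equiv 2 (Fin n → ℝ)).symm (X *ᵥ uvec) := rfl
      rw [hinner, hXuv]
      show yvec ⬝ᵥ (X *ᵥ uvec) = w j0 * R
      rw [hys, hus, Matrix.mulVec_mulVec, ← Matrix.vecMul_transpose,
        Matrix.dotProduct_mulVec, Matrix.vecMul_vecMul, hX]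
      have hmat : Zᵀ * (Z * Q * Qᵀ) = Matrix.diagonal w * (Q * Qᵀ) := by
        rw [← hZ]; simp only [Matrix.mul_assoc]
      rw [hmat]
      have : s ᵥ* (Matrix.diagonal w * (Q * Qᵀ)) ⬝ᵥ s
          = (Matrix.diagonal w * (Q * Qᵀ)) j0 j0 := by
        simp [hs, Matrix.single_vecMul, dotProduct_single]
      rw [this, Matrix.diagonal_mul]
      simp only [Matrix.mul_apply, Matrix.transpose_apply, hR]
    -- chain of inequalities
    have chain : w j0 * R ≤ Real.sqrt (w j0) * (specNorm X * Real.sqrt R) := by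
      calc w j0 * R = ⟪y, (LinearMap.toContinuousLinearMap (Matrix.toEuclideanLin X)) u⟫_ℝ :=
            hXu.symm
        _ ≤ ‖y‖ * ‖(LinearMap.toContinuousLinearMap (Matrix.toEuclideanLin X)) u‖ :=
            real_inner_le_norm _ _
        _ ≤ ‖y‖ * (specNorm X * ‖u‖) := by
            apply mul_le_mul_of_nonneg_left (ContinuousLinearMap.le_opNorm _ _) (norm_nonneg _)
        _ = Real.sqrt (w j0) * (specNorm X * Real.sqrt R) := by rw [hyn, hun]
    have hs1 : 0 < Real.sqrt (w j0) := Real.sqrt_pos.mpr hwj0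
    have hs2 : 1 ≤ Real.sqrt R := by
      rw [show (1:ℝ) = Real.sqrt 1 by simp]
      exact Real.sqrt_le_sqrt hR1
    have hw1 : w j0 = Real.sqrt (w j0) ^ 2 := (Real.sq_sqrt hwj0.le).symm
    have hw2 : R = Real.sqrt R ^ 2 := (Real.sq_sqrt (by linarith : (0:ℝ) ≤ R)).symm
    have hpos : 0 < Real.sqrt (w j0) * Real.sqrt R :=
      mul_pos hs1 (lt_of_lt_of_le one_pos hs2)
    have h3 : Real.sqrt (w j0) * Real.sqrt R ≤ specNorm X := by
      apply le_of_mul_le_mul_left _ hpos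
      nlinarith [chain]
    calc Real.sqrt (w j0) ≤ Real.sqrt (w j0) * Real.sqrt R :=
          le_mul_of_one_le_right hs1.le hs2
      _ ≤ specNorm X := h3
  exact part1.trans part2
end

section
/- Let a ≥ 1 and b ≥ 0 be integers with d = a + b. Let Z be an n × d real matrix such that Zᵀ Z is a diagonal matrix with strictly positive diagonal entries, let Q be a d × d real matrix with Q I_{a,b} Qᵀ = I_{a,b}, and set X = Z Q. Then ‖Z‖_F = ‖X‖_F if and only if Q is (a,b) block orthogonal, i.e. Q = diag(Q₁, Q₂) with Q₁ an a × a orthogonal matrix and Q₂ a b × b orthogonal matrix. -/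
open Matrix

/-- If `Zᵀ Z` is diagonal with strictly positive diagonal entries,
`Q I_{a,b} Qᵀ = I_{a,b}` and `X = Z Q`, then `‖Z‖_F = ‖X‖_F` iff `Q` is `(a,b)` block
orthogonal, i.e. `Q = diag(Q₁, Q₂)` with `Q₁` an `a × a` orthogonal matrix and `Q₂` a
`b × b` orthogonal matrix. -/
theorem stmt8 (n a b : ℕ) (ha : 1 ≤ a)
    (Z : Matrix (Fin n) (Fin a ⊕ Fin b) ℝ) (w : Fin a ⊕ Fin b → ℝ)
    (hw : ∀ i, 0 < w i) (hZ : Zᵀ * Z = Matrix.diagonal w)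
    (Q : Matrix (Fin a ⊕ Fin b) (Fin a ⊕ Fin b) ℝ)
    (hQ : Q * IabS a b * Qᵀ = IabS a b)
    (X : Matrix (Fin n) (Fin a ⊕ Fin b) ℝ) (hX : X = Z * Q) :
    frobNorm Z = frobNorm X ↔
      ∃ (Q₁ : Matrix (Fin a) (Fin a) ℝ) (Q₂ : Matrix (Fin b) (Fin b) ℝ),
        Q₁ * Q₁ᵀ = 1 ∧ Q₂ * Q₂ᵀ = 1 ∧ Q = Matrix.fromBlocks Q₁ 0 0 Q₂ := by
  classical
  set ε : Fin a ⊕ Fin b → ℝ := Sum.elim (fun _ => 1) (fun _ => -1) with hεdef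
  have hI : IabS a b = Matrix.diagonal ε := by
    unfold IabS
    ext i j
    rcases i with i | i <;> rcases j with j | j <;>
      simp [Matrix.fromBlocks, Matrix.diagonal_apply, Matrix.one_apply, hεdef] <;>
      split <;> simp
  have hQd : Q * Matrix.diagonal ε * Qᵀ = Matrix.diagonal ε := by rw [← hI]; exact hQ
  have hQ' : ∀ k l, ∑ j, ε j * (Q k j * Q l j) = Matrix.diagonal ε k l := by
    intro k l
    have h := congrFun (congrFun hQd k) l
    rw [Matrix.mul_apply] at h
    simp only [Matrix.mul_diagonal, Matrix.transpose_apply] at h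
    rw [← h]
    exact Finset.sum_congr rfl fun j _ => by ring
  set T : Fin a ⊕ Fin b → ℝ := fun k => ∑ j : Fin a, Q k (Sum.inl j) ^ 2 with hT
  set B : Fin a ⊕ Fin b → ℝ := fun k => ∑ j : Fin b, Q k (Sum.inr j) ^ 2 with hB
  have hTnn : ∀ k, 0 ≤ T k := fun k => Finset.sum_nonneg fun j _ => sq_nonneg _
  have hBnn : ∀ k, 0 ≤ B k := fun k => Finset.sum_nonneg fun j _ => sq_nonneg _
  have hrow : ∀ k, T k - B k = ε k := by
    intro k
    have h := hQ' k k
    rw [Matrix.diagonal_apply_eq] at h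
    rw [← h, Fintype.sum_sum_type]
    simp [hT, hB, hεdef, sq, sub_eq_add_neg]
  have hrsq : ∀ k, ∑ j, Q k j ^ 2 = T k + B k := by
    intro k
    rw [Fintype.sum_sum_type]
  have hSZ : ∑ i, ∑ j, Z i j ^ 2 = ∑ k, w k := by
    have h1 : ∑ i, ∑ j, Z i j ^ 2 = ∑ j, (Zᵀ * Z) j j := by
      rw [Finset.sum_comm]
      simp [Matrix.mul_apply, sq]
    rw [h1, hZ]
    simp
  have hSX : ∑ i, ∑ j, X i j ^ 2 = ∑ k, w k * (T k + B k) := by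
    have h1 : ∑ i, ∑ j, X i j ^ 2 = ∑ j, (Xᵀ * X) j j := by
      rw [Finset.sum_comm]
      simp [Matrix.mul_apply, sq]
    have h2 : Xᵀ * X = Qᵀ * (Matrix.diagonal w * Q) := by
      rw [hX, Matrix.transpose_mul, Matrix.mul_assoc, ← Matrix.mul_assoc Zᵀ Z Q, hZ]
    rw [h1, h2]
    have h3 : ∀ j, (Qᵀ * (Matrix.diagonal w * Q)) j j = ∑ k, w k * Q k j ^ 2 := by
      intro j
      rw [Matrix.mul_apply]
      simp only [Matrix.diagonal_mul, Matrix.transpose_apply]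
      exact Finset.sum_congr rfl fun k _ => by ring
    calc ∑ j, (Qᵀ * (Matrix.diagonal w * Q)) j j
        = ∑ j, ∑ k, w k * Q k j ^ 2 := Finset.sum_congr rfl fun j _ => h3 j
      _ = ∑ k, ∑ j, w k * Q k j ^ 2 := Finset.sum_comm
      _ = ∑ k, w k * (T k + B k) := by
          refine Finset.sum_congr rfl fun k _ => ?_
          rw [← Finset.mul_sum, hrsq]
  have hG : ∑ k, w k * (T k + B k) - ∑ k, w k
      = ∑ k, 2 * w k * Sum.elim (fun i => B (Sum.inl i)) (fun i => T (Sum.inr i)) k := by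
    rw [← Finset.sum_sub_distrib]
    refine Finset.sum_congr rfl fun k _ => ?_
    rcases k with k | k
    · have h := hrow (Sum.inl k)
      simp only [hεdef, Sum.elim_inl] at h ⊢
      have h2 : T (Sum.inl k) = B (Sum.inl k) + 1 := by linarith
      rw [h2]; ring
    · have h := hrow (Sum.inr k)
      simp only [hεdef, Sum.elim_inr] at h ⊢
      have h2 : B (Sum.inr k) = T (Sum.inr k) + 1 := by linarith
      rw [h2]; ring
  have hzero : (∑ k, w k * (T k + B k) = ∑ k, w k) ↔
      ((∀ i j, Q (Sum.inl i) (Sum.inr j) = 0) ∧ (∀ i j, Q (Sum.inr i) (Sum.inl j) = 0)) := by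
    constructor
    · intro h
      have hsum0 : ∑ k, 2 * w k * Sum.elim (fun i => B (Sum.inl i)) (fun i => T (Sum.inr i)) k = 0 := by
        rw [← hG]; linarith
      have hterm : ∀ k ∈ Finset.univ, 2 * w k * Sum.elim (fun i => B (Sum.inl i)) (fun i => T (Sum.inr i)) k = 0 := by
        refine (Finset.sum_eq_zero_iff_of_nonneg ?_).mp hsum0
        intro k _
        rcases k with k | k
        · exact mul_nonneg (by linarith [hw (Sum.inl k)]) (hBnn _)
        · exact mul_nonneg (by linarith [hw (Sum.inr k)]) (hTnn _)
      constructor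
      · intro i j
        have h0 := hterm (Sum.inl i) (Finset.mem_univ _)
        simp only [Sum.elim_inl] at h0
        have hb : B (Sum.inl i) = 0 := by
          have := hw (Sum.inl i); nlinarith [hBnn (Sum.inl i)]
        have := (Finset.sum_eq_zero_iff_of_nonneg
          (fun j _ => sq_nonneg (Q (Sum.inl i) (Sum.inr j)))).mp hb j (Finset.mem_univ _)
        exact pow_eq_zero_iff (two_ne_zero) |>.mp this
      · intro i j
        have h0 := hterm (Sum.inr i) (Finset.mem_univ _)
        simp only [Sum.elim_inr] at h0
        have hb : T (Sum.inr i) = 0 := by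
          have := hw (Sum.inr i); nlinarith [hTnn (Sum.inr i)]
        have := (Finset.sum_eq_zero_iff_of_nonneg
          (fun j _ => sq_nonneg (Q (Sum.inr i) (Sum.inl j)))).mp hb j (Finset.mem_univ _)
        exact pow_eq_zero_iff (two_ne_zero) |>.mp this
    · intro ⟨h1, h2⟩
      refine Finset.sum_congr rfl fun k _ => ?_
      rcases k with k | k
      · have hb : B (Sum.inl k) = 0 := by simp [hB, h1]
        have h := hrow (Sum.inl k)
        simp only [hεdef, Sum.elim_inl] at h
        linear_combination w (Sum.inl k) * h + 2 * w (Sum.inl k) * hb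
      · have ht : T (Sum.inr k) = 0 := by simp [hT, h2]
        have h := hrow (Sum.inr k)
        simp only [hεdef, Sum.elim_inr] at h
        linear_combination (-(w (Sum.inr k))) * h + 2 * w (Sum.inr k) * ht
  have hfrob : frobNorm Z = frobNorm X ↔ ∑ k, w k * (T k + B k) = ∑ k, w k := by
    unfold frobNorm
    rw [Real.sqrt_inj (by positivity) (by positivity), hSZ, hSX, eq_comm]
  rw [hfrob, hzero]
  constructor
  · rintro ⟨h1, h2⟩
    refine ⟨fun i j => Q (Sum.inl i) (Sum.inl j), fun i j => Q (Sum.inr i) (Sum.inr j), ?_, ?_, ?_⟩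
    · ext i j
      have h := hQ' (Sum.inl i) (Sum.inl j)
      rw [Fintype.sum_sum_type] at h
      simp only [hεdef, Sum.elim_inl, Sum.elim_inr, one_mul, h1, mul_zero, zero_mul, neg_mul,
        neg_zero, Finset.sum_const_zero, add_zero] at h
      change ∑ m, Q (Sum.inl i) (Sum.inl m) * Q (Sum.inl j) (Sum.inl m) = _
      simp only [Matrix.mul_apply, Matrix.transpose_apply, Matrix.one_apply]
      rw [h]
      rcases eq_or_ne i j with rfl | hij
      · simp [Matrix.diagonal_apply_eq, hεdef]
      · rw [Matrix.diagonal_apply_ne _ (by simp [hij])]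
        simp [hij]
    · ext i j
      have h := hQ' (Sum.inr i) (Sum.inr j)
      rw [Fintype.sum_sum_type] at h
      simp only [hεdef, Sum.elim_inl, Sum.elim_inr, one_mul, h2, mul_zero, zero_mul, neg_mul,
        neg_zero, Finset.sum_const_zero, zero_add] at h
      change ∑ m, Q (Sum.inr i) (Sum.inr m) * Q (Sum.inr j) (Sum.inr m) = _
      simp only [Matrix.mul_apply, Matrix.transpose_apply, Matrix.one_apply]
      rcases eq_or_ne i j with rfl | hij
      · rw [Matrix.diagonal_apply_eq] at h
        simp only [hεdef, Sum.elim_inr] at h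
        have h' : ∑ m : Fin b, Q (Sum.inr i) (Sum.inr m) * Q (Sum.inr i) (Sum.inr m) = 1 := by
          have : -∑ m : Fin b, Q (Sum.inr i) (Sum.inr m) * Q (Sum.inr i) (Sum.inr m) = -1 := by
            rw [← h]; simp
          linarith
        simpa using h'
      · rw [Matrix.diagonal_apply_ne _ (by simp [hij])] at h
        have h' : ∑ m : Fin b, Q (Sum.inr i) (Sum.inr m) * Q (Sum.inr j) (Sum.inr m) = 0 := by
          have : -∑ m : Fin b, Q (Sum.inr i) (Sum.inr m) * Q (Sum.inr j) (Sum.inr m) = 0 := by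
            rw [← h]; simp
          linarith
        simpa [hij] using h'
    · ext k l
      rcases k with k | k <;> rcases l with l | l <;>
        simp [Matrix.fromBlocks, h1, h2]
  · rintro ⟨Q₁, Q₂, hQ₁, hQ₂, rfl⟩
    constructor <;> intro i j <;> simp [Matrix.fromBlocks]
end

section
/- Let d ≥ 2, let x, y ∈ ℝ^d with x₁ ≠ 0 and y₁ ≠ 0, and let D = diag(δ₁, D₂) be an invertible d × d diagonal matrix with δ₁ ≠ 0. Set u = D⁻¹x and v = D⁻¹y. Let Σ_x and Σ_y be d × d real symmetric matrices and set Σ_u = D⁻¹ Σ_x D⁻¹ and Σ_v = D⁻¹ Σ_y D⁻¹. Define V = J̃(x) Σ_x J̃(x)ᵀ + J̃(y) Σ_y J̃(y)ᵀ and V' = J̃(u) Σ_u J̃(u)ᵀ + J̃(v) Σ_v J̃(v)ᵀ. If V is invertible, then V' = δ₁² D₂⁻¹ V D₂⁻¹ is invertible and (s̃(u) − s̃(v))ᵀ (V')⁻¹ (s̃(u) − s̃(v)) = (s̃(x) − s̃(y))ᵀ V⁻¹ (s̃(x) − s̃(y)); that is, the Mahalanobis quadratic form based on the coordinate-ratio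 transform s̃ is the same whether computed from (x, y, Σ_x, Σ_y) or from the diagonally rescaled data (u, v, Σ_u, Σ_v). -/
open Matrix

/-- `s̃(ξ) = ξ_{2:d} / ξ₁`: the vector of coordinate ratios (here `d = m + 1`). -/
noncomputable def stil {m : ℕ} (ξ : Fin (m + 1) → ℝ) : Fin m → ℝ :=
  fun i => ξ i.succ / ξ 0

/-- `J̃(ξ) = (1/ξ₁)[−s̃(ξ) | I]`: the `(d−1) × d` Jacobian of `s̃` (here `d = m + 1`). -/
noncomputable def Jtil {m : ℕ} (ξ : Fin (m + 1) → ℝ) :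
    Matrix (Fin m) (Fin (m + 1)) ℝ :=
  Matrix.of fun i j =>
    (ξ 0)⁻¹ *
      (Fin.cons (-(stil ξ i)) (fun j' : Fin m => if j' = i then (1 : ℝ) else 0) :
        Fin (m + 1) → ℝ) j

lemma inv_diag_eq {n : ℕ} (e : Fin n → ℝ) (he : ∀ i, e i ≠ 0) :
    (Matrix.diagonal e)⁻¹ = Matrix.diagonal fun i => (e i)⁻¹ := by
  refine Matrix.inv_eq_right_inv ?_
  rw [Matrix.diagonal_mul_diagonal]
  convert Matrix.diagonal_one using 2
  funext i
  exact mul_inv_cancel₀ (he i)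

lemma Jtil_rescale {m : ℕ} (x w : Fin (m + 1) → ℝ) (hx0 : x 0 ≠ 0) (hw : ∀ i, w i ≠ 0) :
    Jtil (fun i => (w i)⁻¹ * x i) =
      w 0 • ((Matrix.diagonal fun i : Fin m => (w i.succ)⁻¹) * Jtil x * Matrix.diagonal w) := by
  ext i j
  have hw0 := hw 0
  have hwi := hw i.succ
  rw [Matrix.smul_apply, Matrix.mul_diagonal, Matrix.diagonal_mul, smul_eq_mul]
  unfold Jtil stil
  refine Fin.cases ?_ ?_ j
  · simp only [Matrix.of_apply, Fin.cons_zero]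
    field_simp
  · intro j'
    simp only [Matrix.of_apply, Fin.cons_succ]
    by_cases h : j' = i
    · subst h
      simp only [if_pos rfl]
      field_simp
    · simp [h]

lemma stil_rescale {m : ℕ} (x w : Fin (m + 1) → ℝ) (hx0 : x 0 ≠ 0) (hw : ∀ i, w i ≠ 0) :
    stil (fun i => (w i)⁻¹ * x i) =
      w 0 • ((Matrix.diagonal fun i : Fin m => (w i.succ)⁻¹) *ᵥ stil x) := by
  funext i
  have hw0 := hw 0
  have hwi := hw i.succ
  simp only [stil, Pi.smul_apply, Matrix.mulVec_diagonal, smul_eq_mul]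
  field_simp

lemma conj_helper {m : ℕ} (J : Matrix (Fin m) (Fin (m + 1)) ℝ)
    (S D Dinv : Matrix (Fin (m + 1)) (Fin (m + 1)) ℝ)
    (Ei : Matrix (Fin m) (Fin m) ℝ) (c : ℝ)
    (hDD : D * Dinv = 1) (hDD' : Dinv * D = 1) (hDt : Dᵀ = D) (hEt : Eiᵀ = Ei) :
    (c • (Ei * J * D)) * (Dinv * S * Dinv) * (c • (Ei * J * D))ᵀ
      = c ^ 2 • (Ei * (J * S * Jᵀ) * Ei) := by
  rw [Matrix.transpose_smul, Matrix.transpose_mul, Matrix.transpose_mul, hDt, hEt]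
  rw [Matrix.smul_mul, Matrix.smul_mul, Matrix.mul_smul, smul_smul, ← sq]
  congr 1
  have h1 : Dinv * (D * (Jᵀ * Ei)) = Jᵀ * Ei := by
    rw [← Matrix.mul_assoc, hDD', Matrix.one_mul]
  have h2 : D * (Dinv * (S * (Jᵀ * Ei))) = S * (Jᵀ * Ei) := by
    rw [← Matrix.mul_assoc, hDD, Matrix.one_mul]
  simp only [Matrix.mul_assoc, h1, h2]

/-- The Mahalanobis quadratic form built from the coordinate-ratio
transform `s̃` is invariant under an invertible diagonal rescaling `D = diag(δ₁, D₂)`: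
with `u = D⁻¹x`, `v = D⁻¹y`, `Σ_u = D⁻¹ Σ_x D⁻¹`, `Σ_v = D⁻¹ Σ_y D⁻¹`,
`V = J̃(x) Σ_x J̃(x)ᵀ + J̃(y) Σ_y J̃(y)ᵀ` and
`V' = J̃(u) Σ_u J̃(u)ᵀ + J̃(v) Σ_v J̃(v)ᵀ`, if `V` is invertible then
`V' = δ₁² D₂⁻¹ V D₂⁻¹` is invertible and
`(s̃(u) − s̃(v))ᵀ (V')⁻¹ (s̃(u) − s̃(v)) = (s̃(x) − s̃(y))ᵀ V⁻¹ (s̃(x) − s̃(y))`. -/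
theorem stmt17 (m : ℕ) (hm : 1 ≤ m)
    (x y : Fin (m + 1) → ℝ) (hx0 : x 0 ≠ 0) (hy0 : y 0 ≠ 0)
    (w : Fin (m + 1) → ℝ) (hw : ∀ i, w i ≠ 0)
    (D : Matrix (Fin (m + 1)) (Fin (m + 1)) ℝ) (hD : D = Matrix.diagonal w)
    (u v : Fin (m + 1) → ℝ) (hu : u = D⁻¹ *ᵥ x) (hv : v = D⁻¹ *ᵥ y)
    (Sx Sy : Matrix (Fin (m + 1)) (Fin (m + 1)) ℝ)
    (hSx : Sx.IsSymm) (hSy : Sy.IsSymm)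
    (Su Sv : Matrix (Fin (m + 1)) (Fin (m + 1)) ℝ)
    (hSu : Su = D⁻¹ * Sx * D⁻¹) (hSv : Sv = D⁻¹ * Sy * D⁻¹)
    (V V' : Matrix (Fin m) (Fin m) ℝ)
    (hV : V = Jtil x * Sx * (Jtil x)ᵀ + Jtil y * Sy * (Jtil y)ᵀ)
    (hV' : V' = Jtil u * Su * (Jtil u)ᵀ + Jtil v * Sv * (Jtil v)ᵀ)
    (hVinv : IsUnit V.det) :
    V' = (w 0) ^ 2 •
        ((Matrix.diagonal fun i : Fin m => w i.succ)⁻¹ * V *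
          (Matrix.diagonal fun i : Fin m => w i.succ)⁻¹) ∧
    IsUnit V'.det ∧
    (stil u - stil v) ⬝ᵥ (V'⁻¹ *ᵥ (stil u - stil v)) =
      (stil x - stil y) ⬝ᵥ (V⁻¹ *ᵥ (stil x - stil y)) := by
  have hw0 := hw 0
  set e : Fin m → ℝ := fun i => w i.succ with he
  set Ei : Matrix (Fin m) (Fin m) ℝ := Matrix.diagonal fun i => (e i)⁻¹ with hEi
  set E : Matrix (Fin m) (Fin m) ℝ := Matrix.diagonal e with hEdef
  have hEinv : E⁻¹ = Ei := inv_diag_eq e (fun i => hw i.succ)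
  have hEdet : IsUnit E.det := by
    rw [hEdef, Matrix.det_diagonal]
    exact isUnit_iff_ne_zero.mpr (Finset.prod_ne_zero_iff.mpr fun i _ => hw i.succ)
  have hDdet : IsUnit D.det := by
    rw [hD, Matrix.det_diagonal]
    exact isUnit_iff_ne_zero.mpr (Finset.prod_ne_zero_iff.mpr fun i _ => hw i)
  have hDinv : D⁻¹ = Matrix.diagonal fun i => (w i)⁻¹ := by rw [hD]; exact inv_diag_eq w hw
  have hDD : D * D⁻¹ = 1 := Matrix.mul_nonsing_inv D hDdet
  have hDD' : D⁻¹ * D = 1 := Matrix.nonsing_inv_mul D hDdet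
  have hDt : Dᵀ = D := by rw [hD, Matrix.diagonal_transpose]
  have hEt : Eiᵀ = Ei := by rw [hEi, Matrix.diagonal_transpose]
  have hu' : u = fun i => (w i)⁻¹ * x i := by
    funext i; rw [hu, hDinv, Matrix.mulVec_diagonal]
  have hv' : v = fun i => (w i)⁻¹ * y i := by
    funext i; rw [hv, hDinv, Matrix.mulVec_diagonal]
  have hJu : Jtil u = w 0 • (Ei * Jtil x * D) := by
    rw [hu', hD]; exact Jtil_rescale x w hx0 hw
  have hJv : Jtil v = w 0 • (Ei * Jtil y * D) := by
    rw [hv', hD]; exact Jtil_rescale y w hy0 hw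
  have hV'eq : V' = (w 0) ^ 2 • (Ei * V * Ei) := by
    rw [hV', hJu, hJv, hSu, hSv,
      conj_helper (Jtil x) Sx D D⁻¹ Ei (w 0) hDD hDD' hDt hEt,
      conj_helper (Jtil y) Sy D D⁻¹ Ei (w 0) hDD hDD' hDt hEt,
      hV, ← smul_add, Matrix.mul_add, Matrix.add_mul]
  have hEiE : Ei * E = 1 := by rw [← hEinv]; exact Matrix.nonsing_inv_mul E hEdet
  have hEEi : E * Ei = 1 := by rw [← hEinv]; exact Matrix.mul_nonsing_inv E hEdet
  have hw02 : (w 0) ^ 2 ≠ 0 := pow_ne_zero 2 hw0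
  set Wm : Matrix (Fin m) (Fin m) ℝ := ((w 0) ^ 2)⁻¹ • (E * V⁻¹ * E) with hWm
  have hright : V' * Wm = 1 := by
    rw [hV'eq, hWm, Matrix.smul_mul, Matrix.mul_smul, smul_smul,
      mul_inv_cancel₀ hw02, one_smul]
    have h1 : Ei * (E * (V⁻¹ * E)) = V⁻¹ * E := by
      rw [← Matrix.mul_assoc, hEiE, Matrix.one_mul]
    have h2 : V * (V⁻¹ * E) = E := by
      rw [← Matrix.mul_assoc, Matrix.mul_nonsing_inv V hVinv, Matrix.one_mul]
    simp only [Matrix.mul_assoc, h1, h2, hEiE]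
  have hV'det : IsUnit V'.det := Matrix.isUnit_det_of_right_inverse hright
  have hV'inv : V'⁻¹ = Wm := Matrix.inv_eq_right_inv hright
  refine ⟨by rw [hV'eq, hEinv], hV'det, ?_⟩
  set a : Fin m → ℝ := stil x - stil y with ha
  have hsu : stil u - stil v = w 0 • (Ei *ᵥ a) := by
    rw [hu', hv', stil_rescale x w hx0 hw, stil_rescale y w hy0 hw,
      ← smul_sub, ← Matrix.mulVec_sub]
  have hkey : ∀ b c : Fin m → ℝ, (Ei *ᵥ b) ⬝ᵥ (E *ᵥ c) = b ⬝ᵥ c := by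
    intro b c
    simp only [hEi, hEdef, dotProduct, Matrix.mulVec_diagonal]
    refine Finset.sum_congr rfl fun i _ => ?_
    have : e i ≠ 0 := hw i.succ
    field_simp
  rw [hV'inv, hsu, hWm]
  rw [Matrix.mulVec_smul, Matrix.smul_mulVec, smul_smul]
  have hEmv : (E * V⁻¹ * E) *ᵥ (Ei *ᵥ a) = E *ᵥ (V⁻¹ *ᵥ a) := by
    rw [Matrix.mulVec_mulVec, Matrix.mul_assoc (E * V⁻¹) E Ei, hEEi, Matrix.mul_one,
      ← Matrix.mulVec_mulVec]
  rw [hEmv, smul_dotProduct, dotProduct_smul, hkey a (V⁻¹ *ᵥ a), smul_eq_mul, smul_eq_mul]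
  field_simp
end
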